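/- There is no arrangement of lines in the affine (or real projective) plane realizing the Fano configuration: 7 lines and 7 points such that every point lies on exactly 3 of the lines, every line contains exactly 3 of the points, and every two lines meet in one of the 7 points (signature [3^7] for 7 lines). -/

import Mathlib

open scoped Classical

/-- A line in the real plane. -/
def IsLine (l : Set (ℝ × ℝ)) : Prop :=
  ∃ a b c : ℝ, (a, b) ≠ (0, 0) ∧ l = {p : ℝ × ℝ | a * p.1 + b * p.2 = c}

/-- Three points are collinear (determinant criterion). -/
def Col (A B C : ℝ × ℝ) : Prop :=
  (B.1 - A.1) * (C.2 - A.2) - (B.2 - A.2) * (C.1 - A.1) = 0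

lemma ne_coords {A B : ℝ × ℝ} (h : A ≠ B) : B.1 - A.1 ≠ 0 ∨ B.2 - A.2 ≠ 0 := by
  by_contra hc
  push_neg at hc
  exact h (Prod.ext_iff.mpr ⟨by linarith [hc.1], by linarith [hc.2]⟩)

lemma col_of_line {l : Set (ℝ × ℝ)} (hl : IsLine l) {A B C : ℝ × ℝ}
    (hA : A ∈ l) (hB : B ∈ l) (hC : C ∈ l) : Col A B C := by
  obtain ⟨a, b, c, hab, rfl⟩ := hl
  simp only [Set.mem_setOf_eq] at hA hB hC
  have hab' : a ≠ 0 ∨ b ≠ 0 := by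
    by_contra h; push_neg at h; exact hab (by simp [h.1, h.2])
  unfold Col
  rcases hab' with h | h
  · have key : a * ((B.1 - A.1) * (C.2 - A.2) - (B.2 - A.2) * (C.1 - A.1)) = 0 := by
      linear_combination (C.2 - A.2) * hB - (B.2 - A.2) * hC + (B.2 - C.2) * hA
    exact (mul_eq_zero.mp key).resolve_left h
  · have key : b * ((B.1 - A.1) * (C.2 - A.2) - (B.2 - A.2) * (C.1 - A.1)) = 0 := by
      linear_combination (C.1 - B.1) * hA + (A.1 - C.1) * hB + (B.1 - A.1) * hC
    exact (mul_eq_zero.mp key).resolve_left h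

lemma mem_of_col {l : Set (ℝ × ℝ)} (hl : IsLine l) {A B C : ℝ × ℝ}
    (hA : A ∈ l) (hB : B ∈ l) (hAB : A ≠ B) (h : Col A B C) : C ∈ l := by
  obtain ⟨a, b, c, hab, rfl⟩ := hl
  simp only [Set.mem_setOf_eq] at hA hB ⊢
  unfold Col at h
  rcases ne_coords hAB with hd | hd
  · have key : (B.1 - A.1) * (a * C.1 + b * C.2 - c) = 0 := by
      linear_combination b * h + (C.1 - A.1) * hB - (C.1 - A.1) * hA + (B.1 - A.1) * hA
    have := (mul_eq_zero.mp key).resolve_left hd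
    linarith
  · have key : (B.2 - A.2) * (a * C.1 + b * C.2 - c) = 0 := by
      linear_combination (-a) * h + (C.2 - A.2) * hB - (C.2 - A.2) * hA + (B.2 - A.2) * hA
    have := (mul_eq_zero.mp key).resolve_left hd
    linarith

lemma line_eq {l₁ l₂ : Set (ℝ × ℝ)} (h₁ : IsLine l₁) (h₂ : IsLine l₂) {A B : ℝ × ℝ}
    (hA1 : A ∈ l₁) (hA2 : A ∈ l₂) (hB1 : B ∈ l₁) (hB2 : B ∈ l₂) (hAB : A ≠ B) : l₁ = l₂ := by
  ext C
  constructor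
  · intro hC; exact mem_of_col h₂ hA2 hB2 hAB (col_of_line h₁ hA1 hB1 hC)
  · intro hC; exact mem_of_col h₁ hA1 hB1 hAB (col_of_line h₂ hA2 hB2 hC)

lemma exists_ratio {A B C : ℝ × ℝ} (hAB : A ≠ B) (h : Col A B C) :
    ∃ t : ℝ, C.1 - A.1 = t * (B.1 - A.1) ∧ C.2 - A.2 = t * (B.2 - A.2) := by
  unfold Col at h
  rcases ne_coords hAB with hd | hd
  · refine ⟨(C.1 - A.1) / (B.1 - A.1), by field_simp, ?_⟩
    field_simp
    linear_combination h
  · refine ⟨(C.2 - A.2) / (B.2 - A.2), ?_, by field_simp⟩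
    field_simp
    linear_combination -h

lemma exists_coords (e1 e2 f1 f2 x1 x2 : ℝ) (hD : e1 * f2 - e2 * f1 ≠ 0) :
    ∃ b c : ℝ, x1 = b * e1 + c * f1 ∧ x2 = b * e2 + c * f2 := by
  refine ⟨(x1 * f2 - x2 * f1) / (e1 * f2 - e2 * f1),
          (e1 * x2 - e2 * x1) / (e1 * f2 - e2 * f1), ?_, ?_⟩
  · rw [div_mul_eq_mul_div, div_mul_eq_mul_div, ← add_div, eq_div_iff hD]
    ring
  · rw [div_mul_eq_mul_div, div_mul_eq_mul_div, ← add_div, eq_div_iff hD]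
    ring

lemma fano_core (p1 p2 p3 q r1 r2 r3 : ℝ × ℝ)
    (hP : Col p1 p2 p3)
    (h1 : Col r1 p1 q) (h2 : Col r2 p2 q) (h3 : Col r3 p3 q)
    (hm1 : Col r2 r3 p1) (hm2 : Col r3 r1 p2) (hm3 : Col r1 r2 p3)
    (hr : ¬ Col r1 r2 r3)
    (nq1 : ¬ Col r2 r3 q) (nq2 : ¬ Col r3 r1 q) (nq3 : ¬ Col r1 r2 q) : False := by
  have h12 : r1 ≠ r2 := by rintro rfl; exact nq3 (by simp [Col])
  have h23 : r2 ≠ r3 := by rintro rfl; exact nq1 (by simp [Col])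
  have h31 : r3 ≠ r1 := by rintro rfl; exact nq2 (by simp [Col])
  have hD : (r2.1 - r1.1) * (r3.2 - r1.2) - (r2.2 - r1.2) * (r3.1 - r1.1) ≠ 0 := hr
  obtain ⟨u, hu1, hu2⟩ := exists_ratio h23 hm1
  obtain ⟨v, hv1, hv2⟩ := exists_ratio h31 hm2
  obtain ⟨w, hw1, hw2⟩ := exists_ratio h12 hm3
  obtain ⟨β, γ, hq1, hq2⟩ := exists_coords (r2.1 - r1.1) (r2.2 - r1.2) (r3.1 - r1.1)
    (r3.2 - r1.2) (q.1 - r1.1) (q.2 - r1.2) hD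
  have hp11 : p1.1 = r1.1 + (1 - u) * (r2.1 - r1.1) + u * (r3.1 - r1.1) := by
    linear_combination hu1
  have hp12 : p1.2 = r1.2 + (1 - u) * (r2.2 - r1.2) + u * (r3.2 - r1.2) := by
    linear_combination hu2
  have hp21 : p2.1 = r1.1 + (1 - v) * (r3.1 - r1.1) := by linear_combination hv1
  have hp22 : p2.2 = r1.2 + (1 - v) * (r3.2 - r1.2) := by linear_combination hv2
  have hp31 : p3.1 = r1.1 + w * (r2.1 - r1.1) := by linear_combination hw1
  have hp32 : p3.2 = r1.2 + w * (r2.2 - r1.2) := by linear_combination hw2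
  have hq1' : q.1 = r1.1 + β * (r2.1 - r1.1) + γ * (r3.1 - r1.1) := by linear_combination hq1
  have hq2' : q.2 = r1.2 + β * (r2.2 - r1.2) + γ * (r3.2 - r1.2) := by linear_combination hq2
  unfold Col at hP h1 h2 h3 nq1 nq2 nq3
  simp only [hp11, hp12, hp21, hp22, hp31, hp32, hq1', hq2'] at hP h1 h2 h3
  simp only [hq1', hq2'] at nq1 nq2 nq3
  have E1 : (1 - u) * γ - u * β = 0 := by
    have key : ((1 - u) * γ - u * β) * ((r2.1 - r1.1) * (r3.2 - r1.2) - (r2.2 - r1.2) * (r3.1 - r1.1)) = 0 := by linear_combination h1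
    exact (mul_eq_zero.mp key).resolve_right hD
  have E2 : (-1) * γ - (1 - v) * (β - 1) = 0 := by
    have key : ((-1) * γ - (1 - v) * (β - 1)) * ((r2.1 - r1.1) * (r3.2 - r1.2) - (r2.2 - r1.2) * (r3.1 - r1.1)) = 0 := by linear_combination h2
    exact (mul_eq_zero.mp key).resolve_right hD
  have E3 : w * (γ - 1) + β = 0 := by
    have key : (w * (γ - 1) + β) * ((r2.1 - r1.1) * (r3.2 - r1.2) - (r2.2 - r1.2) * (r3.1 - r1.1)) = 0 := by linear_combination h3
    exact (mul_eq_zero.mp key).resolve_right hD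
  have E4 : (u - 1) * (-u) - (1 - v - u) * (w - 1 + u) = 0 := by
    have key : ((u - 1) * (-u) - (1 - v - u) * (w - 1 + u)) * ((r2.1 - r1.1) * (r3.2 - r1.2) - (r2.2 - r1.2) * (r3.1 - r1.1)) = 0 := by
      linear_combination hP
    exact (mul_eq_zero.mp key).resolve_right hD
  have N1 : β + γ - 1 ≠ 0 := fun h => nq1 (by linear_combination (-((r2.1 - r1.1) * (r3.2 - r1.2) - (r2.2 - r1.2) * (r3.1 - r1.1))) * h)
  have N2 : β ≠ 0 := fun h => nq2 (by linear_combination ((r2.1 - r1.1) * (r3.2 - r1.2) - (r2.2 - r1.2) * (r3.1 - r1.1)) * h)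
  have N3 : γ ≠ 0 := fun h => nq3 (by linear_combination ((r2.1 - r1.1) * (r3.2 - r1.2) - (r2.2 - r1.2) * (r3.1 - r1.1)) * h)
  have hs : β + γ ≠ 0 := fun h => N3 (by linear_combination E1 + u * h)
  have hb1 : (1 : ℝ) - β ≠ 0 := fun h => N3 (by linear_combination (-1) * E2 + (1 - v) * h)
  have hg1 : (1 : ℝ) - γ ≠ 0 := fun h => N2 (by linear_combination E3 + w * h)
  have hu' : u = γ / (β + γ) := by rw [eq_div_iff hs]; linear_combination -E1
  have hv' : v = (1 - β - γ) / (1 - β) := by rw [eq_div_iff hb1]; linear_combination -E2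
  have hw' : w = β / (1 - γ) := by rw [eq_div_iff hg1]; linear_combination -E3
  rw [hu', hv', hw'] at E4
  field_simp at E4
  have key : (β * γ * ((β + γ) * ((β + γ) * (β + γ)))) * (β + γ - 1) = 0 := by
    linear_combination (-1/2 : ℝ) * (β + γ) ^ 2 * E4
  rcases mul_eq_zero.mp key with h | h
  · exact (mul_ne_zero (mul_ne_zero N2 N3) (mul_ne_zero hs (mul_ne_zero hs hs))) h
  · exact N1 h

lemma eq_three {α : Type*} [DecidableEq α] {S : Finset α} {a b c : α} (h3 : S.card = 3)
    (ha : a ∈ S) (hb : b ∈ S) (hc : c ∈ S) (hab : a ≠ b) (hac : a ≠ c) (hbc : b ≠ c) :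
    S = {a, b, c} := by
  have hc3 : ({a, b, c} : Finset α).card = 3 := by
    rw [Finset.card_insert_of_notMem (by simp [hab, hac]),
        Finset.card_insert_of_notMem (by simp [hbc]), Finset.card_singleton]
  refine (Finset.eq_of_subset_of_card_le ?_ ?_).symm
  · intro x hx
    simp only [Finset.mem_insert, Finset.mem_singleton] at hx
    rcases hx with rfl | rfl | rfl <;> assumption
  · rw [h3, hc3]

lemma third_elem {α : Type*} [DecidableEq α] {S : Finset α} {a b : α} (h3 : S.card = 3)
    (ha : a ∈ S) (hb : b ∈ S) (hab : a ≠ b) : ∃ r ∈ S, r ≠ a ∧ r ≠ b := by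
  by_contra hc
  push_neg at hc
  have hsub : S ⊆ {a, b} := by
    intro x hx
    rcases eq_or_ne x a with rfl | h
    · simp
    · simp [hc x hx h]
  have h1 := Finset.card_le_card hsub
  have h2 : ({a, b} : Finset α).card ≤ 2 := by
    apply le_trans (Finset.card_insert_le _ _)
    simp
  omega

lemma two_others {α : Type*} [DecidableEq α] {S : Finset α} {g : α} (h3 : S.card = 3)
    (hg : g ∈ S) : ∃ m ∈ S, ∃ m' ∈ S, m ≠ g ∧ m' ≠ g ∧ m ≠ m' := by
  obtain ⟨a, b, c, hab, hac, hbc, rfl⟩ := Finset.card_eq_three.mp h3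
  simp only [Finset.mem_insert, Finset.mem_singleton] at hg
  rcases hg with rfl | rfl | rfl
  · exact ⟨b, by simp, c, by simp, hab.symm, hac.symm, hbc⟩
  · exact ⟨a, by simp, c, by simp, hab, hbc.symm, hac⟩
  · exact ⟨a, by simp, b, by simp, hac, hbc, hab⟩

/-- The Fano configuration is not realizable by straight lines in the
real plane: there are no 7 lines and 7 points such that every point lies on exactly
3 of the lines, every line contains exactly 3 of the points, and every two distinct
lines meet in one of the 7 points (signature `[3^7]`). -/
theorem no_fano_line_arrangement :
    ¬ ∃ (L : Finset (Set (ℝ × ℝ))) (P : Finset (ℝ × ℝ)),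
      L.card = 7 ∧ P.card = 7 ∧ (∀ l ∈ L, IsLine l) ∧
      (∀ p ∈ P, (L.filter fun l => p ∈ l).card = 3) ∧
      (∀ l ∈ L, (P.filter fun p => p ∈ l).card = 3) ∧
      (∀ l₁ ∈ L, ∀ l₂ ∈ L, l₁ ≠ l₂ → ∃ p ∈ P, p ∈ l₁ ∧ p ∈ l₂) := by
  rintro ⟨L, P, hL7, hP7, hIsLine, hdeg, hsize, hmeet⟩
  have four_points : ∀ m ∈ L, ∀ a b c d : ℝ × ℝ, a ∈ P → b ∈ P → c ∈ P → d ∈ P →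
      a ∈ m → b ∈ m → c ∈ m → d ∈ m →
      a ≠ b → a ≠ c → a ≠ d → b ≠ c → b ≠ d → c ≠ d → False := by
    intro m hm a b c d haP hbP hcP hdP ham hbm hcm hdm hab hac had hbc hbd hcd
    have hsub : ({a, b, c, d} : Finset (ℝ × ℝ)) ⊆ P.filter (fun p => p ∈ m) := by
      intro x hx
      simp only [Finset.mem_insert, Finset.mem_singleton] at hx
      rcases hx with rfl | rfl | rfl | rfl <;> simp [Finset.mem_filter, *]
    have hcard : ({a, b, c, d} : Finset (ℝ × ℝ)).card = 4 := by
      rw [Finset.card_insert_of_notMem (by simp [hab, hac, had]),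
          Finset.card_insert_of_notMem (by simp [hbc, hbd]),
          Finset.card_insert_of_notMem (by simp [hcd]), Finset.card_singleton]
    have hle := Finset.card_le_card hsub
    rw [hcard, hsize m hm] at hle
    omega
  obtain ⟨l, hl⟩ := Finset.card_pos.mp (by rw [hL7]; norm_num : 0 < L.card)
  -- a point of P not on l
  obtain ⟨q, hqP, hql⟩ : ∃ q ∈ P, q ∉ l := by
    by_contra hc
    push_neg at hc
    have hfl : P.filter (fun p => p ∈ l) = P := Finset.filter_true_of_mem hc
    have h3 := hsize l hl
    rw [hfl, hP7] at h3
    omega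
  -- the three lines through q
  obtain ⟨g1, g2, g3, hg12, hg13, hg23, hLqe⟩ := Finset.card_eq_three.mp (hdeg q hqP)
  have hg1 : g1 ∈ L ∧ q ∈ g1 := (Finset.mem_filter (a := g1)).mp (by rw [hLqe]; simp)
  have hg2 : g2 ∈ L ∧ q ∈ g2 := (Finset.mem_filter (a := g2)).mp (by rw [hLqe]; simp)
  have hg3 : g3 ∈ L ∧ q ∈ g3 := (Finset.mem_filter (a := g3)).mp (by rw [hLqe]; simp)
  have hg1l : g1 ≠ l := fun h => hql (h ▸ hg1.2)
  have hg2l : g2 ≠ l := fun h => hql (h ▸ hg2.2)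
  have hg3l : g3 ≠ l := fun h => hql (h ▸ hg3.2)
  -- meets of g_i with l
  obtain ⟨p1, hp1P, hp1g, hp1l⟩ := hmeet g1 hg1.1 l hl hg1l
  obtain ⟨p2, hp2P, hp2g, hp2l⟩ := hmeet g2 hg2.1 l hl hg2l
  obtain ⟨p3, hp3P, hp3g, hp3l⟩ := hmeet g3 hg3.1 l hl hg3l
  have hqp1 : q ≠ p1 := fun h => hql (h ▸ hp1l)
  have hqp2 : q ≠ p2 := fun h => hql (h ▸ hp2l)
  have hqp3 : q ≠ p3 := fun h => hql (h ▸ hp3l)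
  have hp12 : p1 ≠ p2 := by
    intro h
    exact hg12 (line_eq (hIsLine g1 hg1.1) (hIsLine g2 hg2.1) hg1.2 hg2.2 hp1g
      (by rw [h]; exact hp2g) hqp1)
  have hp13 : p1 ≠ p3 := by
    intro h
    exact hg13 (line_eq (hIsLine g1 hg1.1) (hIsLine g3 hg3.1) hg1.2 hg3.2 hp1g
      (by rw [h]; exact hp3g) hqp1)
  have hp23 : p2 ≠ p3 := by
    intro h
    exact hg23 (line_eq (hIsLine g2 hg2.1) (hIsLine g3 hg3.1) hg2.2 hg3.2 hp2g
      (by rw [h]; exact hp3g) hqp2)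
  have hPl : P.filter (fun p => p ∈ l) = {p1, p2, p3} :=
    eq_three (hsize l hl) (Finset.mem_filter.mpr ⟨hp1P, hp1l⟩)
      (Finset.mem_filter.mpr ⟨hp2P, hp2l⟩) (Finset.mem_filter.mpr ⟨hp3P, hp3l⟩) hp12 hp13 hp23
  -- third points of the g_i
  obtain ⟨r1, hr1S, hr1q, hr1p1⟩ := third_elem (hsize g1 hg1.1)
    (Finset.mem_filter.mpr ⟨hqP, hg1.2⟩) (Finset.mem_filter.mpr ⟨hp1P, hp1g⟩) hqp1
  obtain ⟨r2, hr2S, hr2q, hr2p2⟩ := third_elem (hsize g2 hg2.1)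
    (Finset.mem_filter.mpr ⟨hqP, hg2.2⟩) (Finset.mem_filter.mpr ⟨hp2P, hp2g⟩) hqp2
  obtain ⟨r3, hr3S, hr3q, hr3p3⟩ := third_elem (hsize g3 hg3.1)
    (Finset.mem_filter.mpr ⟨hqP, hg3.2⟩) (Finset.mem_filter.mpr ⟨hp3P, hp3g⟩) hqp3
  have hr1P : r1 ∈ P := (Finset.mem_filter.mp hr1S).1
  have hr1g1 : r1 ∈ g1 := (Finset.mem_filter.mp hr1S).2
  have hr2P : r2 ∈ P := (Finset.mem_filter.mp hr2S).1
  have hr2g2 : r2 ∈ g2 := (Finset.mem_filter.mp hr2S).2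
  have hr3P : r3 ∈ P := (Finset.mem_filter.mp hr3S).1
  have hr3g3 : r3 ∈ g3 := (Finset.mem_filter.mp hr3S).2
  have hr1l : r1 ∉ l := by
    intro h
    have hle : l = g1 := line_eq (hIsLine l hl) (hIsLine g1 hg1.1) hp1l hp1g h hr1g1 hr1p1.symm
    exact hql (by rw [hle]; exact hg1.2)
  have hr2l : r2 ∉ l := by
    intro h
    have hle : l = g2 := line_eq (hIsLine l hl) (hIsLine g2 hg2.1) hp2l hp2g h hr2g2 hr2p2.symm
    exact hql (by rw [hle]; exact hg2.2)
  have hr3l : r3 ∉ l := by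
    intro h
    have hle : l = g3 := line_eq (hIsLine l hl) (hIsLine g3 hg3.1) hp3l hp3g h hr3g3 hr3p3.symm
    exact hql (by rw [hle]; exact hg3.2)
  have hr12 : r1 ≠ r2 := by
    intro h
    exact hg12 (line_eq (hIsLine g1 hg1.1) (hIsLine g2 hg2.1) hg1.2 hg2.2 hr1g1
      (by rw [h]; exact hr2g2) hr1q.symm)
  have hr13 : r1 ≠ r3 := by
    intro h
    exact hg13 (line_eq (hIsLine g1 hg1.1) (hIsLine g3 hg3.1) hg1.2 hg3.2 hr1g1
      (by rw [h]; exact hr3g3) hr1q.symm)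
  have hr23 : r2 ≠ r3 := by
    intro h
    exact hg23 (line_eq (hIsLine g2 hg2.1) (hIsLine g3 hg3.1) hg2.2 hg3.2 hr2g2
      (by rw [h]; exact hr3g3) hr2q.symm)
  have hr1p2 : r1 ≠ p2 := fun h => hr1l (h ▸ hp2l)
  have hr1p3 : r1 ≠ p3 := fun h => hr1l (h ▸ hp3l)
  have hr2p1 : r2 ≠ p1 := fun h => hr2l (h ▸ hp1l)
  have hr2p3 : r2 ≠ p3 := fun h => hr2l (h ▸ hp3l)
  have hr3p1 : r3 ≠ p1 := fun h => hr3l (h ▸ hp1l)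
  have hr3p2 : r3 ≠ p2 := fun h => hr3l (h ▸ hp2l)
  have hPg1 : P.filter (fun p => p ∈ g1) = {q, p1, r1} :=
    eq_three (hsize g1 hg1.1) (Finset.mem_filter.mpr ⟨hqP, hg1.2⟩)
      (Finset.mem_filter.mpr ⟨hp1P, hp1g⟩) (Finset.mem_filter.mpr ⟨hr1P, hr1g1⟩)
      hqp1 hr1q.symm hr1p1.symm
  have hPg2 : P.filter (fun p => p ∈ g2) = {q, p2, r2} :=
    eq_three (hsize g2 hg2.1) (Finset.mem_filter.mpr ⟨hqP, hg2.2⟩)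
      (Finset.mem_filter.mpr ⟨hp2P, hp2g⟩) (Finset.mem_filter.mpr ⟨hr2P, hr2g2⟩)
      hqp2 hr2q.symm hr2p2.symm
  have hPg3 : P.filter (fun p => p ∈ g3) = {q, p3, r3} :=
    eq_three (hsize g3 hg3.1) (Finset.mem_filter.mpr ⟨hqP, hg3.2⟩)
      (Finset.mem_filter.mpr ⟨hp3P, hp3g⟩) (Finset.mem_filter.mpr ⟨hr3P, hr3g3⟩)
      hqp3 hr3q.symm hr3p3.symm
  -- claim for lines through r1 other than g1
  have claim12 : ∀ m ∈ L, r1 ∈ m → m ≠ g1 → (r2 ∈ m ∧ p3 ∈ m) ∨ (p2 ∈ m ∧ r3 ∈ m) := by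
    intro m hmL hr1m hmg1
    have hml : m ≠ l := fun h => hr1l (h ▸ hr1m)
    have hmg2 : m ≠ g2 := by
      intro h
      have hmem : r1 ∈ ({q, p2, r2} : Finset (ℝ × ℝ)) := by
        rw [← hPg2]; exact Finset.mem_filter.mpr ⟨hr1P, h ▸ hr1m⟩
      simp only [Finset.mem_insert, Finset.mem_singleton] at hmem
      rcases hmem with h' | h' | h'
      exacts [hr1q h', hr1p2 h', hr12 h']
    have hmg3 : m ≠ g3 := by
      intro h
      have hmem : r1 ∈ ({q, p3, r3} : Finset (ℝ × ℝ)) := by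
        rw [← hPg3]; exact Finset.mem_filter.mpr ⟨hr1P, h ▸ hr1m⟩
      simp only [Finset.mem_insert, Finset.mem_singleton] at hmem
      rcases hmem with h' | h' | h'
      exacts [hr1q h', hr1p3 h', hr13 h']
    have hqm : q ∉ m := by
      intro h
      have hmem : m ∈ ({g1, g2, g3} : Finset (Set (ℝ × ℝ))) := by
        rw [← hLqe]; exact Finset.mem_filter.mpr ⟨hmL, h⟩
      simp only [Finset.mem_insert, Finset.mem_singleton] at hmem
      rcases hmem with h' | h' | h'
      exacts [hmg1 h', hmg2 h', hmg3 h']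
    obtain ⟨x, hxP, hxm, hxg2⟩ := hmeet m hmL g2 hg2.1 hmg2
    have hx : x = p2 ∨ x = r2 := by
      have hmem : x ∈ ({q, p2, r2} : Finset (ℝ × ℝ)) := by
        rw [← hPg2]; exact Finset.mem_filter.mpr ⟨hxP, hxg2⟩
      simp only [Finset.mem_insert, Finset.mem_singleton] at hmem
      rcases hmem with h' | h' | h'
      · exact absurd (h' ▸ hxm) hqm
      · exact Or.inl h'
      · exact Or.inr h'
    obtain ⟨y, hyP, hym, hyg3⟩ := hmeet m hmL g3 hg3.1 hmg3
    have hy : y = p3 ∨ y = r3 := by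
      have hmem : y ∈ ({q, p3, r3} : Finset (ℝ × ℝ)) := by
        rw [← hPg3]; exact Finset.mem_filter.mpr ⟨hyP, hyg3⟩
      simp only [Finset.mem_insert, Finset.mem_singleton] at hmem
      rcases hmem with h' | h' | h'
      · exact absurd (h' ▸ hym) hqm
      · exact Or.inl h'
      · exact Or.inr h'
    rcases hx with h' | h'
    · rcases hy with h'' | h''
      · exfalso
        exact hml (line_eq (hIsLine m hmL) (hIsLine l hl) (h' ▸ hxm) hp2l (h'' ▸ hym) hp3l hp23)
      · exact Or.inr ⟨h' ▸ hxm, h'' ▸ hym⟩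
    · rcases hy with h'' | h''
      · exact Or.inl ⟨h' ▸ hxm, h'' ▸ hym⟩
      · exfalso
        obtain ⟨z, hzP, hzm, hzl⟩ := hmeet m hmL l hl hml
        have hzr1 : r1 ≠ z := fun h => hr1l (h ▸ hzl)
        have hzr2 : r2 ≠ z := fun h => hr2l (h ▸ hzl)
        have hzr3 : r3 ≠ z := fun h => hr3l (h ▸ hzl)
        exact four_points m hmL r1 r2 r3 z hr1P hr2P hr3P hzP hr1m (h' ▸ hxm) (h'' ▸ hym) hzm
          hr12 hr13 hzr1 hr23 hzr2 hzr3
  -- claim for lines through r2 other than g2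
  have claim21 : ∀ m ∈ L, r2 ∈ m → m ≠ g2 → (r1 ∈ m ∧ p3 ∈ m) ∨ (p1 ∈ m ∧ r3 ∈ m) := by
    intro m hmL hr2m hmg2
    have hml : m ≠ l := fun h => hr2l (h ▸ hr2m)
    have hmg1 : m ≠ g1 := by
      intro h
      have hmem : r2 ∈ ({q, p1, r1} : Finset (ℝ × ℝ)) := by
        rw [← hPg1]; exact Finset.mem_filter.mpr ⟨hr2P, h ▸ hr2m⟩
      simp only [Finset.mem_insert, Finset.mem_singleton] at hmem
      rcases hmem with h' | h' | h'
      exacts [hr2q h', hr2p1 h', hr12 h'.symm]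
    have hmg3 : m ≠ g3 := by
      intro h
      have hmem : r2 ∈ ({q, p3, r3} : Finset (ℝ × ℝ)) := by
        rw [← hPg3]; exact Finset.mem_filter.mpr ⟨hr2P, h ▸ hr2m⟩
      simp only [Finset.mem_insert, Finset.mem_singleton] at hmem
      rcases hmem with h' | h' | h'
      exacts [hr2q h', hr2p3 h', hr23 h']
    have hqm : q ∉ m := by
      intro h
      have hmem : m ∈ ({g1, g2, g3} : Finset (Set (ℝ × ℝ))) := by
        rw [← hLqe]; exact Finset.mem_filter.mpr ⟨hmL, h⟩
      simp only [Finset.mem_insert, Finset.mem_singleton] at hmem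
      rcases hmem with h' | h' | h'
      exacts [hmg1 h', hmg2 h', hmg3 h']
    obtain ⟨x, hxP, hxm, hxg1⟩ := hmeet m hmL g1 hg1.1 hmg1
    have hx : x = p1 ∨ x = r1 := by
      have hmem : x ∈ ({q, p1, r1} : Finset (ℝ × ℝ)) := by
        rw [← hPg1]; exact Finset.mem_filter.mpr ⟨hxP, hxg1⟩
      simp only [Finset.mem_insert, Finset.mem_singleton] at hmem
      rcases hmem with h' | h' | h'
      · exact absurd (h' ▸ hxm) hqm
      · exact Or.inl h'
      · exact Or.inr h'
    obtain ⟨y, hyP, hym, hyg3⟩ := hmeet m hmL g3 hg3.1 hmg3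
    have hy : y = p3 ∨ y = r3 := by
      have hmem : y ∈ ({q, p3, r3} : Finset (ℝ × ℝ)) := by
        rw [← hPg3]; exact Finset.mem_filter.mpr ⟨hyP, hyg3⟩
      simp only [Finset.mem_insert, Finset.mem_singleton] at hmem
      rcases hmem with h' | h' | h'
      · exact absurd (h' ▸ hym) hqm
      · exact Or.inl h'
      · exact Or.inr h'
    rcases hx with h' | h'
    · rcases hy with h'' | h''
      · exfalso
        exact hml (line_eq (hIsLine m hmL) (hIsLine l hl) (h' ▸ hxm) hp1l (h'' ▸ hym) hp3l hp13)
      · exact Or.inr ⟨h' ▸ hxm, h'' ▸ hym⟩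
    · rcases hy with h'' | h''
      · exact Or.inl ⟨h' ▸ hxm, h'' ▸ hym⟩
      · exfalso
        obtain ⟨z, hzP, hzm, hzl⟩ := hmeet m hmL l hl hml
        have hzr1 : r1 ≠ z := fun h => hr1l (h ▸ hzl)
        have hzr2 : r2 ≠ z := fun h => hr2l (h ▸ hzl)
        have hzr3 : r3 ≠ z := fun h => hr3l (h ▸ hzl)
        exact four_points m hmL r1 r2 r3 z hr1P hr2P hr3P hzP (h' ▸ hxm) hr2m (h'' ▸ hym) hzm
          hr12 hr13 hzr1 hr23 hzr2 hzr3
  -- two further lines through r1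
  obtain ⟨mA', hmA'S, mB', hmB'S, hmA'g, hmB'g, hmAB'⟩ :=
    two_others (hdeg r1 hr1P) (Finset.mem_filter.mpr ⟨hg1.1, hr1g1⟩)
  have hmA'L : mA' ∈ L := (Finset.mem_filter.mp hmA'S).1
  have hr1A' : r1 ∈ mA' := (Finset.mem_filter.mp hmA'S).2
  have hmB'L : mB' ∈ L := (Finset.mem_filter.mp hmB'S).1
  have hr1B' : r1 ∈ mB' := (Finset.mem_filter.mp hmB'S).2
  have cA := claim12 mA' hmA'L hr1A' hmA'g
  have cB := claim12 mB' hmB'L hr1B' hmB'g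
  obtain ⟨mA, mB, hmAL, hr1A, hr2A, hp3A, hmBL, hr1B, hp2B, hr3B⟩ :
      ∃ mA mB, mA ∈ L ∧ r1 ∈ mA ∧ r2 ∈ mA ∧ p3 ∈ mA ∧ mB ∈ L ∧ r1 ∈ mB ∧ p2 ∈ mB ∧ r3 ∈ mB := by
    rcases cA with ⟨ha1, ha2⟩ | ⟨ha1, ha2⟩ <;> rcases cB with ⟨hb1, hb2⟩ | ⟨hb1, hb2⟩
    · exact absurd (line_eq (hIsLine mA' hmA'L) (hIsLine mB' hmB'L) hr1A' hr1B' ha1 hb1 hr12)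
        hmAB'
    · exact ⟨mA', mB', hmA'L, hr1A', ha1, ha2, hmB'L, hr1B', hb1, hb2⟩
    · exact ⟨mB', mA', hmB'L, hr1B', hb1, hb2, hmA'L, hr1A', ha1, ha2⟩
    · exact absurd (line_eq (hIsLine mA' hmA'L) (hIsLine mB' hmB'L) hr1A' hr1B' ha1 hb1 hr1p2)
        hmAB'
  -- a line through r2, p1, r3
  obtain ⟨mC', hmC'S, mD', hmD'S, hmC'g, hmD'g, hmCD'⟩ :=
    two_others (hdeg r2 hr2P) (Finset.mem_filter.mpr ⟨hg2.1, hr2g2⟩)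
  have hmC'L : mC' ∈ L := (Finset.mem_filter.mp hmC'S).1
  have hr2C' : r2 ∈ mC' := (Finset.mem_filter.mp hmC'S).2
  have hmD'L : mD' ∈ L := (Finset.mem_filter.mp hmD'S).1
  have hr2D' : r2 ∈ mD' := (Finset.mem_filter.mp hmD'S).2
  have cC := claim21 mC' hmC'L hr2C' hmC'g
  have cD := claim21 mD' hmD'L hr2D' hmD'g
  obtain ⟨mC, hmCL, hr2C, hp1C, hr3C⟩ :
      ∃ mC, mC ∈ L ∧ r2 ∈ mC ∧ p1 ∈ mC ∧ r3 ∈ mC := by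
    rcases cC with ⟨hc1, hc2⟩ | ⟨hc1, hc2⟩
    · rcases cD with ⟨hd1, hd2⟩ | ⟨hd1, hd2⟩
      · exact absurd (line_eq (hIsLine mC' hmC'L) (hIsLine mD' hmD'L) hr2C' hr2D' hc1 hd1
          (hr12.symm)) hmCD'
      · exact ⟨mD', hmD'L, hr2D', hd1, hd2⟩
    · exact ⟨mC', hmC'L, hr2C', hc1, hc2⟩
  -- collinearity facts and the algebraic contradiction
  have colP : Col p1 p2 p3 := col_of_line (hIsLine l hl) hp1l hp2l hp3l
  have col1 : Col r1 p1 q := col_of_line (hIsLine g1 hg1.1) hr1g1 hp1g hg1.2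
  have col2 : Col r2 p2 q := col_of_line (hIsLine g2 hg2.1) hr2g2 hp2g hg2.2
  have col3 : Col r3 p3 q := col_of_line (hIsLine g3 hg3.1) hr3g3 hp3g hg3.2
  have colm1 : Col r2 r3 p1 := col_of_line (hIsLine mC hmCL) hr2C hr3C hp1C
  have colm2 : Col r3 r1 p2 := col_of_line (hIsLine mB hmBL) hr3B hr1B hp2B
  have colm3 : Col r1 r2 p3 := col_of_line (hIsLine mA hmAL) hr1A hr2A hp3A
  have hrcol : ¬ Col r1 r2 r3 := by
    intro h
    have hr3A : r3 ∈ mA := mem_of_col (hIsLine mA hmAL) hr1A hr2A hr12 h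
    exact four_points mA hmAL r1 r2 r3 p3 hr1P hr2P hr3P hp3P hr1A hr2A hr3A hp3A
      hr12 hr13 hr1p3 hr23 hr2p3 hr3p3
  have nq1 : ¬ Col r2 r3 q := by
    intro h
    have hqC : q ∈ mC := mem_of_col (hIsLine mC hmCL) hr2C hr3C hr23 h
    exact four_points mC hmCL r2 r3 q p1 hr2P hr3P hqP hp1P hr2C hr3C hqC hp1C
      hr23 hr2q hr2p1 hr3q hr3p1 hqp1
  have nq2 : ¬ Col r3 r1 q := by
    intro h
    have hqB : q ∈ mB := mem_of_col (hIsLine mB hmBL) hr3B hr1B hr13.symm h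
    exact four_points mB hmBL r3 r1 q p2 hr3P hr1P hqP hp2P hr3B hr1B hqB hp2B
      hr13.symm hr3q hr3p2 hr1q hr1p2 hqp2
  have nq3 : ¬ Col r1 r2 q := by
    intro h
    have hqA : q ∈ mA := mem_of_col (hIsLine mA hmAL) hr1A hr2A hr12 h
    exact four_points mA hmAL r1 r2 q p3 hr1P hr2P hqP hp3P hr1A hr2A hqA hp3A
      hr12 hr1q hr1p3 hr2q hr2p3 hqp3
  exact fano_core p1 p2 p3 q r1 r2 r3 colP col1 col2 col3 colm1 colm2 colm3 hrcol nq1 nq2 nq3
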